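/- Let n : ℕ, v : Fin (n+1) → ℍ, c ∈ ℂ and λ ∈ ℍ. Then ∑ a, conj(c * (v a) * λ) * i * (c * (v a) * λ) = normSq(c) • (conj(λ) * μ(v) * λ), where c is viewed in ℍ via the canonical embedding ℂ → ℍ. In particular, the zero set of μ is invariant both under the diagonal left action of unit complex numbers (the U(1)-action defining the quaternion Kähler reduction) and under the diagonal right action of unit quaternions (the S³-action of the induced Hopf bundle V₂(ℂ^{n+1}) → μ⁻¹(0)). -/

import Mathlib

open Quaternion Finset

/-- The imaginary unit `i` of the quaternions. -/
noncomputable def qi : Quaternion ℝ := ⟨0, 1, 0, 0⟩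

/-- The canonical embedding of `ℂ` into the quaternions. -/
noncomputable def cq (c : ℂ) : Quaternion ℝ := ⟨c.re, c.im, 0, 0⟩

/-- The diagonal `U(1)`-moment map on `ℍ^{n+1}`. -/
noncomputable def μ {n : ℕ} (v : Fin (n + 1) → Quaternion ℝ) : Quaternion ℝ :=
  ∑ a, star (v a) * qi * v a

lemma key (c : ℂ) : star (cq c) * qi * cq c = Complex.normSq c • qi := by
  ext <;> simp [Quaternion.ext_iff, Complex.normSq, Quaternion.re_mul, Quaternion.imI_mul, Quaternion.imJ_mul, Quaternion.imK_mul] <;> simp [cq, qi] <;> ring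

lemma term_eq (c : ℂ) (x l : Quaternion ℝ) :
    star (cq c * x * l) * qi * (cq c * x * l) =
      Complex.normSq c • (star l * (star x * qi * x) * l) := by
  have h := key c
  calc star (cq c * x * l) * qi * (cq c * x * l)
      = star l * (star x * ((star (cq c) * qi * cq c) * (x * l))) := by
        simp only [star_mul, mul_assoc]
    _ = Complex.normSq c • (star l * (star x * qi * x) * l) := by
        rw [h]; simp only [smul_mul_assoc, mul_smul_comm, mul_assoc]

/-- Equivariance of the `U(1)`-moment map: for `c ∈ ℂ` and `λ ∈ ℍ`,
`μ(c·v·λ) = normSq(c) • (conj(λ)·μ(v)·λ)`; in particular the zero set of `μ` is invariant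
under the diagonal left `U(1)`-action and the diagonal right `Sp(1)`-action. -/
theorem stmt_6 (n : ℕ) (v : Fin (n + 1) → Quaternion ℝ) (c : ℂ) (l : Quaternion ℝ) :
    (∑ a, star (cq c * v a * l) * qi * (cq c * v a * l)) =
      Complex.normSq c • (star l * μ v * l) ∧
    (μ v = 0 → μ (fun a => cq c * v a * l) = 0) := by
  have main : (∑ a, star (cq c * v a * l) * qi * (cq c * v a * l)) =
      Complex.normSq c • (star l * μ v * l) := by
    simp only [term_eq, μ, ← smul_sum, mul_sum, sum_mul]
  refine ⟨main, fun h => ?_⟩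
  simp only [μ] at main h ⊢
  rw [main, h]
  simp
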